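/- Consider the ranking profile with m = 3 candidates c1, c2, c3 and n = 7 voters whose rank vectors (σ_v(c1), σ_v(c2), σ_v(c3)) are: σ_1 = σ_2 = (1,2,3), σ_3 = σ_4 = (2,1,3), σ_5 = σ_6 = (2,3,1), σ_7 = (3,1,2). Then: (i) c1 is a Condorcet winner of this profile; (ii) for every real p ≥ 1, the permutation with rank vector (2,1,3) is the unique minimizer of ∑_{v=1}^7 d_C(σ, σ_v)^p over all permutations σ of {1,2,3}, where d_C is the Cayley distance. Since this minimizer ranks c2 (and not the Condorcet winner c1) first, the Cayley-based p-Fréchet mean voting rule does not satisfy the Condorcet-winner property for any p ≥ 1. -/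

import Mathlib

open Finset

/-- The rank (in `{1, …, m}`) that the ranking `σ` assigns to candidate `c`. -/
def rk {m : ℕ} (σ : Equiv.Perm (Fin m)) (c : Fin m) : ℕ := (σ c : ℕ) + 1

/-- The number of cycles of a permutation of `Fin m`, fixed points counting as cycles of
length 1. -/
def cycleCount {m : ℕ} (π : Equiv.Perm (Fin m)) : ℕ :=
  π.cycleType.card + (univ.filter fun x => π x = x).card

/-- The Cayley distance `d_C(σ,τ) = m − #cycles(σ ∘ τ⁻¹)`, the minimum number of
transpositions needed to obtain `σ` from `τ`. -/
def dC {m : ℕ} (σ τ : Equiv.Perm (Fin m)) : ℕ := m - cycleCount (σ * τ⁻¹)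

lemma card_cycleType3 (σ : Equiv.Perm (Fin 3)) :
    σ.cycleType.card = if σ = 1 then 0 else 1 := by
  split_ifs with h
  · simp [h]
  · have h2 : ∀ x ∈ σ.cycleType, 2 ≤ x := fun x hx => Equiv.Perm.two_le_of_mem_cycleType hx
    have hsum : σ.cycleType.sum = σ.support.card := Equiv.Perm.sum_cycleType σ
    have hle : σ.support.card ≤ 3 := le_trans (Finset.card_le_card (Finset.subset_univ _)) (by simp)
    have hmul : σ.cycleType.card * 2 ≤ σ.cycleType.sum := Multiset.card_nsmul_le_sum h2
    have hne : σ.cycleType ≠ 0 := by simpa [Equiv.Perm.cycleType_eq_zero] using h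
    have : 1 ≤ σ.cycleType.card := by
      rcases Multiset.exists_mem_of_ne_zero hne with ⟨x, hx⟩
      exact Multiset.card_pos.mpr (fun h0 => by simp [h0] at hx)
    omega

lemma dC_eval (σ τ : Equiv.Perm (Fin 3)) :
    dC σ τ = 3 - ((if σ * τ⁻¹ = 1 then 0 else 1) +
      (univ.filter fun x => (σ * τ⁻¹) x = x).card) := by
  rw [dC, cycleCount, card_cycleType3]

abbrev t01 : Equiv.Perm (Fin 3) := Equiv.swap 0 1
abbrev t02 : Equiv.Perm (Fin 3) := Equiv.swap 0 2
abbrev t12 : Equiv.Perm (Fin 3) := Equiv.swap 1 2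
abbrev cyc : Equiv.Perm (Fin 3) := Equiv.swap 0 1 * Equiv.swap 1 2

lemma perm3_cases (σ : Equiv.Perm (Fin 3)) :
    σ = 1 ∨ σ = t01 ∨ σ = t02 ∨ σ = t12 ∨ σ = cyc ∨ σ = cyc⁻¹ := by
  revert σ; decide


/-- On the profile σ₁ = σ₂ = (1,2,3), σ₃ = σ₄ = (2,1,3), σ₅ = σ₆ = (2,3,1), σ₇ = (3,1,2):
(i) `c1` is a Condorcet winner; (ii) for every real `p ≥ 1` the permutation π = (2,1,3) is
the unique minimizer of `∑ᵥ d_C(σ, σᵥ)^p`; π ranks `c2` first, so the Cayley-based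
p-Fréchet rule fails the Condorcet-winner property for every `p ≥ 1`. -/
theorem stmt_16 (σ1 σ2 σ3 σ4 σ5 σ6 σ7 π : Equiv.Perm (Fin 3))
    (h1 : rk σ1 = ![1,2,3]) (h2 : rk σ2 = ![1,2,3])
    (h3 : rk σ3 = ![2,1,3]) (h4 : rk σ4 = ![2,1,3])
    (h5 : rk σ5 = ![2,3,1]) (h6 : rk σ6 = ![2,3,1])
    (h7 : rk σ7 = ![3,1,2]) (hπ : rk π = ![2,1,3]) :
    (∀ c : Fin 3, c ≠ 0 →
      (univ.filter fun v =>
          rk (![σ1,σ2,σ3,σ4,σ5,σ6,σ7] v) c < rk (![σ1,σ2,σ3,σ4,σ5,σ6,σ7] v) 0).card <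
        (univ.filter fun v =>
          rk (![σ1,σ2,σ3,σ4,σ5,σ6,σ7] v) 0 < rk (![σ1,σ2,σ3,σ4,σ5,σ6,σ7] v) c).card) ∧
    (∀ p : ℝ, 1 ≤ p → ∀ σ : Equiv.Perm (Fin 3), σ ≠ π →
      ∑ v, (dC π (![σ1,σ2,σ3,σ4,σ5,σ6,σ7] v) : ℝ) ^ p <
        ∑ v, (dC σ (![σ1,σ2,σ3,σ4,σ5,σ6,σ7] v) : ℝ) ^ p) ∧
    rk π 1 = 1 := by
  have e1 : σ1 = 1 := by
    ext x; have h := congrFun h1 x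
    fin_cases x <;> simp_all [rk] <;> omega
  have e2 : σ2 = 1 := by
    ext x; have h := congrFun h2 x
    fin_cases x <;> simp_all [rk] <;> omega
  have e3 : σ3 = t01 := by
    ext x; have h := congrFun h3 x
    fin_cases x <;> simp_all [rk, Equiv.swap_apply_def] <;> omega
  have e4 : σ4 = t01 := by
    ext x; have h := congrFun h4 x
    fin_cases x <;> simp_all [rk, Equiv.swap_apply_def] <;> omega
  have e5 : σ5 = cyc := by
    ext x; have h := congrFun h5 x
    fin_cases x <;> simp_all [rk, Equiv.swap_apply_def] <;> omega
  have e6 : σ6 = cyc := by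
    ext x; have h := congrFun h6 x
    fin_cases x <;> simp_all [rk, Equiv.swap_apply_def] <;> omega
  have e7 : σ7 = cyc⁻¹ := by
    ext x; have h := congrFun h7 x
    fin_cases x <;> simp_all [rk, Equiv.swap_apply_def] <;> omega
  have eπ : π = t01 := by
    ext x; have h := congrFun hπ x
    fin_cases x <;> simp_all [rk, Equiv.swap_apply_def] <;> omega
  subst e1 e2 e3 e4 e5 e6 e7 eπ
  refine ⟨?_, ?_, by decide⟩
  · intro c hc
    fin_cases c
    · exact absurd rfl hc
    · decide
    · decide
  · intro p hp σ hσ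
    have r0 : (0:ℝ) ^ p = 0 := Real.zero_rpow (by linarith)
    have r1 : (1:ℝ) ^ p = 1 := Real.one_rpow p
    have r2 : (2:ℝ) ≤ (2:ℝ) ^ p := by
      calc (2:ℝ) = (2:ℝ) ^ (1:ℝ) := (Real.rpow_one 2).symm
        _ ≤ (2:ℝ) ^ p := Real.rpow_le_rpow_of_exponent_le one_le_two hp
    have w2 : (![(1:Equiv.Perm (Fin 3)),1,t01,t01,cyc,cyc,cyc⁻¹] (2:Fin 7)) = t01 := rfl
    have w3 : (![(1:Equiv.Perm (Fin 3)),1,t01,t01,cyc,cyc,cyc⁻¹] (3:Fin 7)) = t01 := rfl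
    have w4 : (![(1:Equiv.Perm (Fin 3)),1,t01,t01,cyc,cyc,cyc⁻¹] (4:Fin 7)) = cyc := rfl
    have w5 : (![(1:Equiv.Perm (Fin 3)),1,t01,t01,cyc,cyc,cyc⁻¹] (5:Fin 7)) = cyc := rfl
    have w6 : (![(1:Equiv.Perm (Fin 3)),1,t01,t01,cyc,cyc,cyc⁻¹] (6:Fin 7)) = cyc⁻¹ := rfl
    have d1 : dC t01 1 = 1 := by rw [dC_eval]; decide
    have d2 : dC t01 t01 = 0 := by rw [dC_eval]; decide
    have d3 : dC t01 cyc = 1 := by rw [dC_eval]; decide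
    have d4 : dC t01 cyc⁻¹ = 1 := by rw [dC_eval]; decide
    rcases perm3_cases σ with h | h | h | h | h | h <;> subst h
    · have k1 : dC (1 : Equiv.Perm (Fin 3)) 1 = 0 := by rw [dC_eval]; decide
      have k2 : dC (1 : Equiv.Perm (Fin 3)) t01 = 1 := by rw [dC_eval]; decide
      have k3 : dC (1 : Equiv.Perm (Fin 3)) cyc = 2 := by rw [dC_eval]; decide
      have k4 : dC (1 : Equiv.Perm (Fin 3)) cyc⁻¹ = 2 := by rw [dC_eval]; decide
      simp only [Fin.sum_univ_seven, Matrix.cons_val_zero, Matrix.cons_val_one,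
        Matrix.head_cons, w2, w3, w4, w5, w6, d1, d2, d3, d4, k1, k2, k3, k4]
      push_cast
      rw [r0, r1]
      linarith
    · exact absurd rfl hσ
    · have k1 : dC t02 1 = 1 := by rw [dC_eval]; decide
      have k2 : dC t02 t01 = 2 := by rw [dC_eval]; decide
      have k3 : dC t02 cyc = 1 := by rw [dC_eval]; decide
      have k4 : dC t02 cyc⁻¹ = 1 := by rw [dC_eval]; decide
      simp only [Fin.sum_univ_seven, Matrix.cons_val_zero, Matrix.cons_val_one,
        Matrix.head_cons, w2, w3, w4, w5, w6, d1, d2, d3, d4, k1, k2, k3, k4]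
      push_cast
      rw [r0, r1]
      linarith
    · have k1 : dC t12 1 = 1 := by rw [dC_eval]; decide
      have k2 : dC t12 t01 = 2 := by rw [dC_eval]; decide
      have k3 : dC t12 cyc = 1 := by rw [dC_eval]; decide
      have k4 : dC t12 cyc⁻¹ = 1 := by rw [dC_eval]; decide
      simp only [Fin.sum_univ_seven, Matrix.cons_val_zero, Matrix.cons_val_one,
        Matrix.head_cons, w2, w3, w4, w5, w6, d1, d2, d3, d4, k1, k2, k3, k4]
      push_cast
      rw [r0, r1]
      linarith
    · have k1 : dC cyc 1 = 2 := by rw [dC_eval]; decide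
      have k2 : dC cyc t01 = 1 := by rw [dC_eval]; decide
      have k3 : dC cyc cyc = 0 := by rw [dC_eval]; decide
      have k4 : dC cyc cyc⁻¹ = 2 := by rw [dC_eval]; decide
      simp only [Fin.sum_univ_seven, Matrix.cons_val_zero, Matrix.cons_val_one,
        Matrix.head_cons, w2, w3, w4, w5, w6, d1, d2, d3, d4, k1, k2, k3, k4]
      push_cast
      rw [r0, r1]
      linarith
    · have k1 : dC cyc⁻¹ 1 = 2 := by rw [dC_eval]; decide
      have k2 : dC cyc⁻¹ t01 = 1 := by rw [dC_eval]; decide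
      have k3 : dC cyc⁻¹ cyc = 2 := by rw [dC_eval]; decide
      have k4 : dC cyc⁻¹ cyc⁻¹ = 0 := by rw [dC_eval]; decide
      simp only [Fin.sum_univ_seven, Matrix.cons_val_zero, Matrix.cons_val_one,
        Matrix.head_cons, w2, w3, w4, w5, w6, d1, d2, d3, d4, k1, k2, k3, k4]
      push_cast
      rw [r0, r1]
      linarith
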